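/- The restrictions to Y of the invariants in the extended base are algebraically independent: the images {M_ξ|_Y : ξ ∈ S} ∪ {L_φ|_Y : φ ∈ Φ} under the restriction homomorphism K[m] → K[Y] form an algebraically independent system over K, where K[Y] is the polynomial algebra in the variables x_ξ, ξ ∈ S, and x_φ, φ ∈ Φ. -/

import Mathlib

open scoped Matrix Classical
open MvPolynomial

/-- `Rsum r k = r 0 + ⋯ + r (k-1)`, the partial sum `R_k` of block sizes. -/
def Rsum (r : ℕ → ℕ) (k : ℕ) : ℕ := (Finset.range k).sum r

/-- Index of the diagonal block containing row/column `a` (0-indexed). -/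
def blockOf (r : ℕ → ℕ) (s a : ℕ) : ℕ :=
  ((Finset.range s).filter fun k => Rsum r (k + 1) ≤ a).card

/-- The set `M` of roots `(i,j)` of the nilradical `m`. -/
def Mset (r : ℕ → ℕ) (s n : ℕ) : Finset (Fin n × Fin n) :=
  Finset.univ.filter fun p => blockOf r s (p.1 : ℕ) < blockOf r s (p.2 : ℕ)

/-- `γ' > γ` iff `γ' − γ` is a positive root. -/
def rootGt {n : ℕ} (γ' γ : Fin n × Fin n) : Prop :=
  (γ'.1 = γ.1 ∧ γ.2 < γ'.2) ∨ (γ'.2 = γ.2 ∧ γ'.1 < γ.1)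

/-- A base `S` of `M`: pairwise incomparable, and every root of `M ∖ S`
exceeds some element of `S`. -/
def IsBase {n : ℕ} (M S : Finset (Fin n × Fin n)) : Prop :=
  S ⊆ M ∧
  (∀ ξ ∈ S, ∀ η ∈ S, ξ ≠ η → ¬rootGt ξ η ∧ ¬rootGt η ξ) ∧
  (∀ γ ∈ M, γ ∉ S → ∃ ξ ∈ S, rootGt γ ξ)

/-- `p` is a positive root of the reductive (block-diagonal) part `r`. -/
def inDr (r : ℕ → ℕ) (s : ℕ) {n : ℕ} (p : Fin n × Fin n) : Prop :=
  p.1 < p.2 ∧ blockOf r s (p.1 : ℕ) = blockOf r s (p.2 : ℕ)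

/-- The coordinate ring `K[m]`: polynomials in the variables `x_ξ`, `ξ ∈ M`. -/
abbrev Rpoly (K : Type) [Field K] (r : ℕ → ℕ) (s n : ℕ) : Type :=
  MvPolynomial {p : Fin n × Fin n // p ∈ Mset r s n} K

/-- The formal matrix `𝕏` of variables (zero outside `M`). -/
noncomputable def Xmat (K : Type) [Field K] (r : ℕ → ℕ) (s n : ℕ) :
    Matrix (Fin n) (Fin n) (Rpoly K r s n) :=
  Matrix.of fun i j => if h : (i, j) ∈ Mset r s n then MvPolynomial.X ⟨(i, j), h⟩ else 0

/-- The minor of a matrix on the ordered row set `I` and ordered column set `J`. -/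
noncomputable def minorDet {n : ℕ} {A : Type} [CommRing A]
    (X : Matrix (Fin n) (Fin n) A) (I J : Finset (Fin n)) : A :=
  if h : J.card = I.card then
    Matrix.det (Matrix.of fun p q : Fin I.card =>
      X (I.orderIsoOfFin rfl p).1 (J.orderIsoOfFin h q).1)
  else 0

/-- The minor `M_γ` attached to a root `γ = (a,b)`: rows `ord{a, i₁, …, i_k}`,
columns `ord{j₁, …, j_k, b}`, where `S_γ = {(i,j) ∈ S : i > a, j < b}`. -/
noncomputable def Mminor (K : Type) [Field K] (r : ℕ → ℕ) (s n : ℕ)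
    (S : Finset (Fin n × Fin n)) (γ : Fin n × Fin n) : Rpoly K r s n :=
  minorDet (Xmat K r s n)
    (insert γ.1 ((S.filter fun p => γ.1 < p.1 ∧ p.2 < γ.2).image Prod.fst))
    (insert γ.2 ((S.filter fun p => γ.1 < p.1 ∧ p.2 < γ.2).image Prod.snd))

/-- The polynomial `L_{φ_q}` for an admissible pair `q = (ξ, ξ')`:
`Σ_{α₁+α₂=α_q, α₁,α₂ ∈ Δ⁺_r ∪ {0}} M_{ξ+α₁} M_{α₂+ξ'}`. -/
noncomputable def Lpoly (K : Type) [Field K] (r : ℕ → ℕ) (s n : ℕ)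
    (S : Finset (Fin n × Fin n)) (ξ ξ' : Fin n × Fin n) : Rpoly K r s n :=
  ∑ m ∈ Finset.univ.filter (fun m : Fin n =>
      (m = ξ.2 ∨ inDr r s (ξ.2, m)) ∧ (m = ξ'.1 ∨ inDr r s (m, ξ'.1))),
    Mminor K r s n S (ξ.1, m) * Mminor K r s n S (m, ξ'.2)

/-- The set `Φ` of roots `φ_q = α_q + ξ'` attached to admissible pairs `q = (ξ, ξ')`. -/
noncomputable def PhiSet (r : ℕ → ℕ) (s n : ℕ) (S : Finset (Fin n × Fin n)) :
    Finset (Fin n × Fin n) :=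
  ((S ×ˢ S).filter fun q => inDr r s (q.1.2, q.2.1)).image fun q => (q.1.2, q.2.2)

/-- The adjoint action of `g` on `K[m]`: the substitution `x_ξ ↦ (g⁻¹ 𝕏 g)_ξ`,
so that `(g·f)(x) = f(g⁻¹ x g)`. -/
noncomputable def adjAct (K : Type) [Field K] (r : ℕ → ℕ) (s n : ℕ)
    (g : Matrix (Fin n) (Fin n) K) : Rpoly K r s n →ₐ[K] Rpoly K r s n :=
  MvPolynomial.aeval fun ξ : {p : Fin n × Fin n // p ∈ Mset r s n} =>
    ((g⁻¹).map (fun a => (MvPolynomial.C a : Rpoly K r s n)) * Xmat K r s n *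
      g.map (fun a => (MvPolynomial.C a : Rpoly K r s n))) ξ.1.1 ξ.1.2

/-- Upper unitriangular matrices: the group `N`. -/
def IsUnitriangular {K : Type} [Field K] {n : ℕ} (g : Matrix (Fin n) (Fin n) K) : Prop :=
  (∀ i, g i i = 1) ∧ ∀ i j : Fin n, j < i → g i j = 0

/-- Membership in the unipotent radical `U` of `P`: `g = I + u` with `u ∈ m`. -/
def InU {K : Type} [Field K] (r : ℕ → ℕ) (s n : ℕ) (g : Matrix (Fin n) (Fin n) K) : Prop :=
  (∀ i, g i i = 1) ∧ ∀ i j : Fin n, i ≠ j → (i, j) ∉ Mset r s n → g i j = 0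

/-- The subalgebra of `K[m]` of polynomials invariant under the adjoint action of
all elements of a set `G` of matrices. -/
noncomputable def invariantAlg (K : Type) [Field K] (r : ℕ → ℕ) (s n : ℕ)
    (G : Set (Matrix (Fin n) (Fin n) K)) : Subalgebra K (Rpoly K r s n) where
  carrier := {f | ∀ g ∈ G, adjAct K r s n g f = f}
  mul_mem' := fun ha hb g hg => by rw [map_mul, ha g hg, hb g hg]
  add_mem' := fun ha hb g hg => by rw [map_add, ha g hg, hb g hg]
  algebraMap_mem' := fun c g hg => (adjAct K r s n g).commutes c

/-- `M'`: the roots of `M` with `E_ξ ∈ m²`, i.e. not lying in a superdiagonal block. -/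
def Mprime (r : ℕ → ℕ) (s n : ℕ) : Finset (Fin n × Fin n) :=
  (Mset r s n).filter fun p => blockOf r s (p.1 : ℕ) + 1 < blockOf r s (p.2 : ℕ)

/-- The broad base `T`: roots `ξ ∈ S`, together with roots `ξ ∈ M` such that
`ξ > γ` for some `γ ∈ S` with `x_ξ`, `x_γ` in the same block `X_{i,j}`. -/
noncomputable def Tset (r : ℕ → ℕ) (s n : ℕ) (S : Finset (Fin n × Fin n)) :
    Finset (Fin n × Fin n) :=
  S ∪ (Mset r s n).filter fun ξ => ∃ γ ∈ S, rootGt ξ γ ∧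
    blockOf r s (ξ.1 : ℕ) = blockOf r s (γ.1 : ℕ) ∧
    blockOf r s (ξ.2 : ℕ) = blockOf r s (γ.2 : ℕ)

/-- The invariant `N_ξ`: the variable `x_ξ` for `ξ ∈ M ∖ M'`, the minor `M_ξ` for `ξ ∈ M'`. -/
noncomputable def Npoly (K : Type) [Field K] (r : ℕ → ℕ) (s n : ℕ)
    (S : Finset (Fin n × Fin n)) (ξ : Fin n × Fin n) : Rpoly K r s n :=
  if ξ ∈ Mprime r s n then Mminor K r s n S ξ
  else if h : ξ ∈ Mset r s n then MvPolynomial.X ⟨ξ, h⟩ else 0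

/-- A matrix lies in the nilradical `m`. -/
def memNilrad {K : Type} [Field K] (r : ℕ → ℕ) (s n : ℕ)
    (x : Matrix (Fin n) (Fin n) K) : Prop :=
  ∀ p : Fin n × Fin n, p ∉ Mset r s n → x p.1 p.2 = 0

/-- `W` is a Zariski-open subset of the affine space `m`. -/
def IsZariskiOpenIn (K : Type) [Field K] (r : ℕ → ℕ) (s n : ℕ)
    (W : Set (Matrix (Fin n) (Fin n) K)) : Prop :=
  ∃ I : Set (Rpoly K r s n),
    W = {x | memNilrad r s n x ∧ ∃ f ∈ I,
      MvPolynomial.eval (fun ξ : {p : Fin n × Fin n // p ∈ Mset r s n} => x ξ.1.1 ξ.1.2) f ≠ 0}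

/-- The restriction homomorphism `K[m] → K[Y]`, `K[Y]` being the polynomial algebra in
the variables `x_ξ`, `ξ ∈ S ∪ Φ`: it sends `x_γ` to `x_γ` for `γ ∈ S ∪ Φ` and to `0`
otherwise. -/
noncomputable def restrictY (K : Type) [Field K] (r : ℕ → ℕ) (s n : ℕ)
    (S : Finset (Fin n × Fin n)) :
    Rpoly K r s n →ₐ[K] MvPolynomial {p : Fin n × Fin n // p ∈ S ∪ PhiSet r s n S} K :=
  MvPolynomial.aeval fun γ : {p : Fin n × Fin n // p ∈ Mset r s n} =>
    if h : γ.1 ∈ S ∪ PhiSet r s n S then MvPolynomial.X ⟨γ.1, h⟩ else 0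


theorem detUnique {n : ℕ} {R : Type} [CommRing R] (A : Matrix (Fin n) (Fin n) R)
    (σ₀ : Equiv.Perm (Fin n)) (h : ∀ σ : Equiv.Perm (Fin n), σ ≠ σ₀ → ∃ i, A (σ i) i = 0) :
    A.det = Equiv.Perm.sign σ₀ • ∏ i, A (σ₀ i) i := by
  rw [Matrix.det_apply]
  rw [Finset.sum_eq_single σ₀]
  · intro σ _ hσ
    obtain ⟨i, hi⟩ := h σ hσ
    rw [Finset.prod_eq_zero (f := fun j => A (σ j) j) (Finset.mem_univ i) hi, smul_zero]
  · intro h; exact absurd (Finset.mem_univ σ₀) h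

theorem prodX {τ : Type} {K : Type} [CommSemiring K] (s : Finset τ) :
    (∏ i ∈ s, (X i : MvPolynomial τ K)) = monomial (∑ i ∈ s, Finsupp.single i 1) 1 := by
  classical
  induction s using Finset.induction_on with
  | empty => simp [monomial_zero']
  | insert _ _ h ih =>
      rw [Finset.prod_insert h, Finset.sum_insert h, ih, X, monomial_mul, one_mul]


theorem prod_monomial {τ K α : Type} [CommSemiring K] (A : Finset α) (g : α → (τ →₀ ℕ))
    (c : α → K) :
    (∏ i ∈ A, (monomial (g i) (c i) : MvPolynomial τ K)) =
      monomial (∑ i ∈ A, g i) (∏ i ∈ A, c i) := by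
  classical
  induction A using Finset.induction_on with
  | empty => simp [monomial_zero']
  | insert _ _ h ih =>
      rw [Finset.prod_insert h, Finset.sum_insert h, Finset.prod_insert h, ih, monomial_mul]

theorem monIndep {σ τ K : Type} [Field K] (t : σ → (τ →₀ ℕ)) (ε : σ → K)
    (hε : ∀ i, ε i ≠ 0)
    (hinj : Function.Injective fun d : σ →₀ ℕ => d.sum fun i k => k • t i) :
    AlgebraicIndependent K (fun i => (monomial (t i) (ε i) : MvPolynomial τ K)) := by
  classical
  rw [algebraicIndependent_iff]
  intro p hp
  set D : (σ →₀ ℕ) → (τ →₀ ℕ) := fun d => d.sum fun i k => k • t i with hD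
  set E : (σ →₀ ℕ) → K := fun d => ∏ i ∈ d.support, ε i ^ d i with hE
  have hEne : ∀ d, E d ≠ 0 := fun d =>
    Finset.prod_ne_zero_iff.2 fun i _ => pow_ne_zero _ (hε i)
  have key : ∀ d c, (aeval fun i => (monomial (t i) (ε i) : MvPolynomial τ K))
      (monomial d c) = monomial (D d) (c * E d) := by
    intro d c
    rw [aeval_monomial]
    have : (Finsupp.prod d fun i k => (monomial (t i) (ε i) : MvPolynomial τ K) ^ k) =
        monomial (D d) (E d) := by
      rw [Finsupp.prod]
      have : ∀ i ∈ d.support, (monomial (t i) (ε i) : MvPolynomial τ K) ^ d i =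
          monomial (d i • t i) (ε i ^ d i) := fun i _ => monomial_pow
      rw [Finset.prod_congr rfl this, prod_monomial]
      rfl
    rw [this, algebraMap_eq, C_mul_monomial]
  have hps : (aeval fun i => (monomial (t i) (ε i) : MvPolynomial τ K)) p =
      ∑ d ∈ p.support, monomial (D d) (coeff d p * E d) := by
    conv_lhs => rw [p.as_sum]
    rw [map_sum]
    exact Finset.sum_congr rfl fun d _ => key d _
  ext d₀
  rw [coeff_zero]
  by_contra hne
  have hd₀ : d₀ ∈ p.support := by rwa [MvPolynomial.mem_support_iff]
  have := congrArg (coeff (D d₀)) (hps ▸ hp)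
  rw [coeff_zero] at this
  rw [MvPolynomial.coeff_sum] at this
  have h2 : ∑ d ∈ p.support, (if D d = D d₀ then coeff d p * E d else 0) = 0 := by
    simpa [coeff_monomial] using this
  rw [Finset.sum_eq_single d₀ (fun d _ hd => if_neg (fun h => hd (hinj h)))
    (fun h => absurd hd₀ h), if_pos rfl] at h2
  exact hne ((mul_eq_zero.1 h2).resolve_right (hEne d₀))

section Comb
variable {n s : ℕ} {r : ℕ → ℕ}

theorem blockOf_mono {a b : ℕ} (h : a ≤ b) : blockOf r s a ≤ blockOf r s b := by
  apply Finset.card_le_card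
  intro k hk
  rw [Finset.mem_filter] at hk ⊢
  exact ⟨hk.1, le_trans hk.2 h⟩

theorem Mset_lt {p : Fin n × Fin n} (hp : p ∈ Mset r s n) : p.1 < p.2 := by
  by_contra h
  push_neg at h
  have := blockOf_mono (r := r) (s := s) (Fin.le_iff_val_le_val.1 h)
  rw [Mset, Finset.mem_filter] at hp
  omega

variable {S : Finset (Fin n × Fin n)}

theorem row_inj (hS : IsBase (Mset r s n) S) {ξ η : Fin n × Fin n} (hξ : ξ ∈ S) (hη : η ∈ S) (h : ξ.1 = η.1) : ξ = η := by
  by_contra hne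
  rcases lt_trichotomy ξ.2 η.2 with h2 | h2 | h2
  · exact (hS.2.1 ξ hξ η hη hne).2 (Or.inl ⟨h.symm, h2⟩)
  · exact hne (Prod.ext h h2)
  · exact (hS.2.1 ξ hξ η hη hne).1 (Or.inl ⟨h, h2⟩)

theorem col_inj (hS : IsBase (Mset r s n) S) {ξ η : Fin n × Fin n} (hξ : ξ ∈ S) (hη : η ∈ S) (h : ξ.2 = η.2) : ξ = η := by
  by_contra hne
  rcases lt_trichotomy ξ.1 η.1 with h1 | h1 | h1
  · exact (hS.2.1 ξ hξ η hη hne).1 (Or.inr ⟨h, h1⟩)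
  · exact hne (Prod.ext h1 h)
  · exact (hS.2.1 ξ hξ η hη hne).2 (Or.inr ⟨h.symm, h1⟩)

/-- P1: every row strictly between `ξ.1` and the block of `ξ.2` is used by an element of `S`
with column `< ξ.2`. -/
theorem P1 (hS : IsBase (Mset r s n) S) {ξ : Fin n × Fin n} (hξ : ξ ∈ S) {a' : Fin n} (h1 : ξ.1 < a')
    (h2 : blockOf r s (a' : ℕ) < blockOf r s (ξ.2 : ℕ)) :
    ∃ η ∈ S, η.1 = a' ∧ η.2 < ξ.2 := by
  have hM : (a', ξ.2) ∈ Mset r s n := by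
    rw [Mset, Finset.mem_filter]; exact ⟨Finset.mem_univ _, h2⟩
  have hnotS : (a', ξ.2) ∉ S := fun hmem => by
    have heq := col_inj hS hmem hξ rfl
    have : ξ.1 < a' := h1
    rw [← heq] at this
    exact absurd this (lt_irrefl _)
  obtain ⟨η, hη, hgt⟩ := hS.2.2 _ hM hnotS
  rcases hgt with ⟨hr, hc⟩ | ⟨hc, hr⟩
  · exact ⟨η, hη, by simpa using hr.symm, hc⟩
  · exfalso
    have heq := col_inj hS hη hξ (by simpa using hc.symm)
    rw [heq] at hr
    exact absurd (lt_trans h1 hr) (lt_irrefl _)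

theorem mem_PhiSet {p : Fin n × Fin n} :
    p ∈ PhiSet r s n S ↔ ∃ ζ ∈ S, ∃ ζ' ∈ S, inDr r s (ζ.2, ζ'.1) ∧ p = (ζ.2, ζ'.2) := by
  constructor
  · intro h
    rw [PhiSet, Finset.mem_image] at h
    obtain ⟨q, hq, hqe⟩ := h
    rw [Finset.mem_filter, Finset.mem_product] at hq
    exact ⟨q.1, hq.1.1, q.2, hq.1.2, hq.2, hqe.symm⟩
  · rintro ⟨ζ, hζ, ζ', hζ', hd, rfl⟩
    rw [PhiSet, Finset.mem_image]
    exact ⟨(ζ, ζ'), by rw [Finset.mem_filter, Finset.mem_product]; exact ⟨⟨hζ, hζ'⟩, hd⟩, rfl⟩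

theorem Phi_sub_M (hS : IsBase (Mset r s n) S) : PhiSet r s n S ⊆ Mset r s n := by
  intro p hp
  obtain ⟨ζ, hζ, ζ', hζ', hd, rfl⟩ := mem_PhiSet.1 hp
  have h2 := hS.1 hζ'
  rw [Mset, Finset.mem_filter] at h2 ⊢
  refine ⟨Finset.mem_univ _, ?_⟩
  have := hd.2
  simp only at this ⊢
  omega

theorem S_Phi_disj (hS : IsBase (Mset r s n) S) {p : Fin n × Fin n} (h1 : p ∈ S)
    (h2 : p ∈ PhiSet r s n S) : False := by
  obtain ⟨ζ, hζ, ζ', hζ', hd, he⟩ := mem_PhiSet.1 h2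
  have hcol : p.2 = ζ'.2 := by rw [he]
  have := col_inj hS h1 hζ' hcol
  have h1' : p.1 = ζ.2 := by rw [he]
  have hlt := hd.1
  rw [← h1', this] at hlt
  simp only at hlt
  exact absurd hlt (lt_irrefl _)

theorem ZCOL (hS : IsBase (Mset r s n) S) {τ : Fin n × Fin n} {c : Fin n} (hτ : τ ∈ S)
    (hc : τ.2 < c) : (τ.1, c) ∉ S ∪ PhiSet r s n S := by
  intro h
  rcases Finset.mem_union.1 h with h | h
  · have := row_inj hS h hτ rfl
    rw [← this] at hc
    exact absurd hc (lt_irrefl _)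
  · obtain ⟨ζ, hζ, ζ', hζ', hd, he⟩ := mem_PhiSet.1 h
    have he1 : τ.1 = ζ.2 := congrArg Prod.fst he
    have he2 : c = ζ'.2 := congrArg Prod.snd he
    have hMτ := hS.1 hτ
    rw [Mset, Finset.mem_filter] at hMτ
    obtain ⟨η, hη, hη1, hη2⟩ := P1 hS hτ (a' := ζ'.1) (he1 ▸ hd.1) (by
      have := hd.2
      rw [← he1] at this
      simp only at this ⊢
      omega)
    have := row_inj hS hη hζ' hη1
    rw [this] at hη2
    rw [he2] at hc
    exact absurd (lt_trans hc hη2) (lt_irrefl _)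

theorem ECOL (hS : IsBase (Mset r s n) S) {γ τ η : Fin n × Fin n}
    (hτ : τ ∈ insert γ (S.filter fun p => γ.1 < p.1 ∧ p.2 < γ.2))
    (hη : η ∈ insert γ (S.filter fun p => γ.1 < p.1 ∧ p.2 < γ.2))
    (hP : (τ.1, η.2) ∈ S ∪ PhiSet r s n S) : τ.1 ≤ η.1 := by
  rcases Finset.mem_insert.1 hη with rfl | hη
  · rcases Finset.mem_insert.1 hτ with rfl | hτ
    · exact le_refl _
    · rw [Finset.mem_filter] at hτ
      exact absurd hP (ZCOL hS hτ.1 hτ.2.2)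
  · rw [Finset.mem_filter] at hη
    rcases Finset.mem_union.1 hP with h | h
    · have := col_inj hS h hη.1 rfl
      exact le_of_eq (congrArg Prod.fst this : (τ.1, η.2).1 = η.1)
    · obtain ⟨ζ, hζ, ζ', hζ', hd, he⟩ := mem_PhiSet.1 h
      rw [Prod.mk.injEq] at he
      obtain ⟨he1, he2⟩ := he
      have := col_inj hS hη.1 hζ' he2
      have hlt := hd.1
      rw [← he1, ← this] at hlt
      exact le_of_lt hlt

theorem T_row_inj (hS : IsBase (Mset r s n) S) {γ τ η : Fin n × Fin n}
    (hτ : τ ∈ insert γ (S.filter fun p => γ.1 < p.1 ∧ p.2 < γ.2))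
    (hη : η ∈ insert γ (S.filter fun p => γ.1 < p.1 ∧ p.2 < γ.2))
    (h : τ.1 = η.1) : τ = η := by
  rcases Finset.mem_insert.1 hτ with rfl | hτ <;> rcases Finset.mem_insert.1 hη with rfl | hη
  · rfl
  · rw [Finset.mem_filter] at hη; rw [h] at hη; exact absurd hη.2.1 (lt_irrefl _)
  · rw [Finset.mem_filter] at hτ; rw [← h] at hτ; exact absurd hτ.2.1 (lt_irrefl _)
  · rw [Finset.mem_filter] at hτ hη; exact row_inj hS hτ.1 hη.1 h

theorem T_col_inj (hS : IsBase (Mset r s n) S) {γ τ η : Fin n × Fin n}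
    (hτ : τ ∈ insert γ (S.filter fun p => γ.1 < p.1 ∧ p.2 < γ.2))
    (hη : η ∈ insert γ (S.filter fun p => γ.1 < p.1 ∧ p.2 < γ.2))
    (h : τ.2 = η.2) : τ = η := by
  rcases Finset.mem_insert.1 hτ with rfl | hτ <;> rcases Finset.mem_insert.1 hη with rfl | hη
  · rfl
  · rw [Finset.mem_filter] at hη; rw [h] at hη; exact absurd hη.2.2 (lt_irrefl _)
  · rw [Finset.mem_filter] at hτ; rw [← h] at hτ; exact absurd hτ.2.2 (lt_irrefl _)
  · rw [Finset.mem_filter] at hτ hη; exact col_inj hS hτ.1 hη.1 h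

end Comb

section Minor
variable {n s : ℕ} {r : ℕ → ℕ} {S : Finset (Fin n × Fin n)}

/-- The set `{γ} ∪ S_γ` indexing rows/columns of the minor `M_γ`. -/
def Tg (S : Finset (Fin n × Fin n)) (γ : Fin n × Fin n) : Finset (Fin n × Fin n) :=
  insert γ (S.filter fun p => γ.1 < p.1 ∧ p.2 < γ.2)

/-- Indicator exponent vector of a root, as a variable of `K[Y]`. -/
noncomputable def embedV (r : ℕ → ℕ) (s n : ℕ) (S : Finset (Fin n × Fin n))
    (p : Fin n × Fin n) : {p : Fin n × Fin n // p ∈ S ∪ PhiSet r s n S} →₀ ℕ :=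
  if h : p ∈ S ∪ PhiSet r s n S then Finsupp.single ⟨p, h⟩ 1 else 0

/-- The exponent vector of the restricted minor `M_γ|_Y`. -/
noncomputable def wv (r : ℕ → ℕ) (s n : ℕ) (S : Finset (Fin n × Fin n))
    (γ : Fin n × Fin n) : {p : Fin n × Fin n // p ∈ S ∪ PhiSet r s n S} →₀ ℕ :=
  ∑ η ∈ Tg S γ, embedV r s n S η

theorem embedV_apply (p : Fin n × Fin n) (x : {p : Fin n × Fin n // p ∈ S ∪ PhiSet r s n S}) :
    embedV r s n S p x = if p = x.1 then 1 else 0 := by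
  rw [embedV]
  by_cases h : p ∈ S ∪ PhiSet r s n S
  · rw [dif_pos h, Finsupp.single_apply]
    congr 1
    simp [Subtype.ext_iff]
  · rw [dif_neg h]
    have : p ≠ x.1 := fun he => h (he ▸ x.2)
    rw [if_neg this]
    rfl

theorem wv_apply (γ : Fin n × Fin n) (x : {p : Fin n × Fin n // p ∈ S ∪ PhiSet r s n S}) :
    wv r s n S γ x = if x.1 ∈ Tg S γ then 1 else 0 := by
  rw [wv, Finset.sum_apply']
  rw [Finset.sum_congr rfl fun p _ => embedV_apply p x]
  exact Finset.sum_ite_eq' _ _ (fun _ => 1)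

variable (K : Type) [Field K]

theorem restrict_Xmat (hS : IsBase (Mset r s n) S) (i j : Fin n) :
    restrictY K r s n S ((Xmat K r s n) i j) =
      if h : (i, j) ∈ S ∪ PhiSet r s n S then X ⟨(i, j), h⟩ else 0 := by
  by_cases hP : (i, j) ∈ S ∪ PhiSet r s n S
  · have hM : (i, j) ∈ Mset r s n := by
      rcases Finset.mem_union.1 hP with h | h
      · exact hS.1 h
      · exact Phi_sub_M hS h
    rw [Xmat, Matrix.of_apply, dif_pos hM, dif_pos hP, restrictY, aeval_X, dif_pos hP]
  · rw [dif_neg hP]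
    by_cases hM : (i, j) ∈ Mset r s n
    · rw [Xmat, Matrix.of_apply, dif_pos hM, restrictY, aeval_X, dif_neg hP]
    · rw [Xmat, Matrix.of_apply, dif_neg hM, map_zero]

theorem Tg_sub_M (hS : IsBase (Mset r s n) S) {γ : Fin n × Fin n} (hγM : γ ∈ Mset r s n) :
    Tg S γ ⊆ Mset r s n := by
  intro τ hτ
  rcases Finset.mem_insert.1 hτ with rfl | hτ
  · exact hγM
  · exact hS.1 (Finset.mem_filter.1 hτ).1

theorem rows_eq (γ : Fin n × Fin n) :
    insert γ.1 ((S.filter fun p => γ.1 < p.1 ∧ p.2 < γ.2).image Prod.fst) =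
      (Tg S γ).image Prod.fst := by
  rw [Tg, Finset.image_insert]

theorem cols_eq (γ : Fin n × Fin n) :
    insert γ.2 ((S.filter fun p => γ.1 < p.1 ∧ p.2 < γ.2).image Prod.snd) =
      (Tg S γ).image Prod.snd := by
  rw [Tg, Finset.image_insert]

theorem rows_card (hS : IsBase (Mset r s n) S) (γ : Fin n × Fin n) :
    ((Tg S γ).image Prod.fst).card = (Tg S γ).card :=
  Finset.card_image_of_injOn fun τ hτ η hη h => T_row_inj hS hτ hη h

theorem cols_card (hS : IsBase (Mset r s n) S) (γ : Fin n × Fin n) :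
    ((Tg S γ).image Prod.snd).card = (Tg S γ).card :=
  Finset.card_image_of_injOn fun τ hτ η hη h => T_col_inj hS hτ hη h


theorem Tg_sub_P (hS : IsBase (Mset r s n) S) {γ : Fin n × Fin n}
    (hγ : γ ∈ S ∪ PhiSet r s n S) : ∀ τ ∈ Tg S γ, τ ∈ S ∪ PhiSet r s n S := by
  intro τ hτ
  rcases Finset.mem_insert.1 hτ with rfl | hτ
  · exact hγ
  · exact Finset.mem_union_left _ (Finset.mem_filter.1 hτ).1

theorem restrict_Mminor (hS : IsBase (Mset r s n) S) {γ : Fin n × Fin n}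
    (hγ : γ ∈ S ∪ PhiSet r s n S) :
    ∃ ε : K, ε ≠ 0 ∧ restrictY K r s n S (Mminor K r s n S γ) =
      monomial (wv r s n S γ) ε := by
  classical
  have hγM : γ ∈ Mset r s n := by
    rcases Finset.mem_union.1 hγ with h | h
    · exact hS.1 h
    · exact Phi_sub_M hS h
  have hTP := Tg_sub_P hS hγ
  have hJI : ((Tg S γ).image Prod.snd).card = ((Tg S γ).image Prod.fst).card := by
    rw [rows_card hS, cols_card hS]
  rw [Mminor, rows_eq γ, cols_eq γ, minorDet, dif_pos hJI]
  have main : ∀ (pfr : ((Tg S γ).image Prod.fst).card = ((Tg S γ).image Prod.fst).card)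
      (pfc : ((Tg S γ).image Prod.snd).card = ((Tg S γ).image Prod.fst).card),
      ∃ ε : K, ε ≠ 0 ∧ restrictY K r s n S (Matrix.det (Matrix.of
        fun p q : Fin ((Tg S γ).image Prod.fst).card =>
        Xmat K r s n ((((Tg S γ).image Prod.fst).orderIsoOfFin pfr) p).1
          ((((Tg S γ).image Prod.snd).orderIsoOfFin pfc) q).1)) =
        monomial (wv r s n S γ) ε := by
    intro pfr pfc
    have rowmem : ∀ p : Fin ((Tg S γ).image Prod.fst).card,
        ((((Tg S γ).image Prod.fst).orderIsoOfFin pfr) p).1 ∈ (Tg S γ).image Prod.fst :=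
      fun p => ((((Tg S γ).image Prod.fst).orderIsoOfFin pfr) p).2
    have hmd : restrictY K r s n S (Matrix.det (Matrix.of
        fun p q : Fin ((Tg S γ).image Prod.fst).card =>
        Xmat K r s n ((((Tg S γ).image Prod.fst).orderIsoOfFin pfr) p).1
          ((((Tg S γ).image Prod.snd).orderIsoOfFin pfc) q).1)) =
        Matrix.det ((Matrix.of fun p q : Fin ((Tg S γ).image Prod.fst).card =>
        Xmat K r s n ((((Tg S γ).image Prod.fst).orderIsoOfFin pfr) p).1
          ((((Tg S γ).image Prod.snd).orderIsoOfFin pfc) q).1).map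
          (fun x => restrictY K r s n S x)) :=
      RingHom.map_det (restrictY K r s n S).toRingHom _
    rw [hmd]
    have hmat : ((Matrix.of fun p q : Fin ((Tg S γ).image Prod.fst).card =>
        Xmat K r s n ((((Tg S γ).image Prod.fst).orderIsoOfFin pfr) p).1
          ((((Tg S γ).image Prod.snd).orderIsoOfFin pfc) q).1).map
          (fun x => restrictY K r s n S x)) =
        Matrix.of fun p q : Fin ((Tg S γ).image Prod.fst).card =>
          if h : (((((Tg S γ).image Prod.fst).orderIsoOfFin pfr) p).1,
              ((((Tg S γ).image Prod.snd).orderIsoOfFin pfc) q).1) ∈ S ∪ PhiSet r s n S then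
            (X ⟨_, h⟩ : MvPolynomial {p : Fin n × Fin n // p ∈ S ∪ PhiSet r s n S} K)
          else 0 := by
      apply Matrix.ext
      intro p q
      rw [Matrix.map_apply, Matrix.of_apply, Matrix.of_apply]
      exact restrict_Xmat K hS _ _
    rw [hmat]
    have hpick : ∀ q : Fin ((Tg S γ).image Prod.fst).card, ∃ η, η ∈ Tg S γ ∧
        η.2 = ((((Tg S γ).image Prod.snd).orderIsoOfFin pfc) q).1 := by
      intro q
      obtain ⟨η, hη, he⟩ := Finset.mem_image.1 ((((Tg S γ).image Prod.snd).orderIsoOfFin pfc) q).2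
      exact ⟨η, hη, he⟩
    choose pick pickT pick2 using hpick
    have pickP : ∀ q, pick q ∈ S ∪ PhiSet r s n S := fun q => hTP _ (pickT q)
    have pickinj : Function.Injective pick := by
      intro q q' h
      have h2 := congrArg Prod.snd h
      rw [pick2 q, pick2 q'] at h2
      exact (((Tg S γ).image Prod.snd).orderIsoOfFin pfc).injective (Subtype.coe_injective h2)
    have pick1I : ∀ q, (pick q).1 ∈ (Tg S γ).image Prod.fst :=
      fun q => Finset.mem_image_of_mem _ (pickT q)
    set m0 : Fin ((Tg S γ).image Prod.fst).card → Fin ((Tg S γ).image Prod.fst).card :=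
      fun q => (((Tg S γ).image Prod.fst).orderIsoOfFin pfr).symm ⟨(pick q).1, pick1I q⟩ with hm0
    have hm0row : ∀ q, ((((Tg S γ).image Prod.fst).orderIsoOfFin pfr) (m0 q)).1 = (pick q).1 := by
      intro q
      rw [hm0, OrderIso.apply_symm_apply]
    have m0inj : Function.Injective m0 := by
      intro q q' h
      have h1 : (pick q).1 = (pick q').1 := by rw [← hm0row q, ← hm0row q', h]
      exact pickinj (T_row_inj hS (pickT q) (pickT q') h1)
    set σ₀ := Equiv.ofBijective m0 (Finite.injective_iff_bijective.1 m0inj) with hσ₀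
    have hσ₀app : ∀ q, σ₀ q = m0 q := fun q => rfl
    have hBdiag : ∀ q, (Matrix.of fun p q : Fin ((Tg S γ).image Prod.fst).card =>
        if h : (((((Tg S γ).image Prod.fst).orderIsoOfFin pfr) p).1,
            ((((Tg S γ).image Prod.snd).orderIsoOfFin pfc) q).1) ∈ S ∪ PhiSet r s n S then
          (X ⟨_, h⟩ : MvPolynomial {p : Fin n × Fin n // p ∈ S ∪ PhiSet r s n S} K)
        else 0) (σ₀ q) q = X ⟨pick q, pickP q⟩ := by
      intro q
      rw [Matrix.of_apply]
      have hpair : (((((Tg S γ).image Prod.fst).orderIsoOfFin pfr) (σ₀ q)).1,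
          ((((Tg S γ).image Prod.snd).orderIsoOfFin pfc) q).1) = pick q := by
        rw [hσ₀app, hm0row, ← pick2 q]
      rw [dif_pos (hpair ▸ pickP q)]
      congr 1
      exact Subtype.ext hpair
    have hzero : ∀ σ : Equiv.Perm (Fin ((Tg S γ).image Prod.fst).card), σ ≠ σ₀ →
        ∃ q, (Matrix.of fun p q : Fin ((Tg S γ).image Prod.fst).card =>
        if h : (((((Tg S γ).image Prod.fst).orderIsoOfFin pfr) p).1,
            ((((Tg S γ).image Prod.snd).orderIsoOfFin pfc) q).1) ∈ S ∪ PhiSet r s n S then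
          (X ⟨_, h⟩ : MvPolynomial {p : Fin n × Fin n // p ∈ S ∪ PhiSet r s n S} K)
        else 0) (σ q) q = 0 := by
      intro σ hσ
      by_contra hno
      push_neg at hno
      have hle : ∀ q, (((((Tg S γ).image Prod.fst).orderIsoOfFin pfr) (σ q)).1 : ℕ) ≤
          (((((Tg S γ).image Prod.fst).orderIsoOfFin pfr) (σ₀ q)).1 : ℕ) := by
        intro q
        have h0 := hno q
        rw [Matrix.of_apply] at h0
        by_cases hP : (((((Tg S γ).image Prod.fst).orderIsoOfFin pfr) (σ q)).1,
            ((((Tg S γ).image Prod.snd).orderIsoOfFin pfc) q).1) ∈ S ∪ PhiSet r s n S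
        · obtain ⟨τ, hτT, hτ1⟩ := Finset.mem_image.1 (rowmem (σ q))
          rw [← hτ1, ← pick2 q] at hP
          have := ECOL hS (γ := γ) hτT (pickT q) hP
          rw [hσ₀app, hm0row, ← hτ1]
          exact_mod_cast this
        · exact absurd (dif_neg hP) h0
      have hsum : (∑ q, (((((Tg S γ).image Prod.fst).orderIsoOfFin pfr) (σ q)).1 : ℕ)) =
          ∑ q, (((((Tg S γ).image Prod.fst).orderIsoOfFin pfr) (σ₀ q)).1 : ℕ) := by
        rw [Equiv.sum_comp σ
            (fun p => (((((Tg S γ).image Prod.fst).orderIsoOfFin pfr) p).1 : ℕ)),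
          Equiv.sum_comp σ₀
            (fun p => (((((Tg S γ).image Prod.fst).orderIsoOfFin pfr) p).1 : ℕ))]
      have heq := (Finset.sum_eq_sum_iff_of_le (fun q _ => hle q)).1 hsum
      apply hσ
      apply Equiv.ext
      intro q
      have := heq q (Finset.mem_univ q)
      apply (((Tg S γ).image Prod.fst).orderIsoOfFin pfr).injective
      apply Subtype.coe_injective
      exact Fin.val_injective this
    rw [detUnique _ σ₀ hzero, Finset.prod_congr rfl (fun q _ => hBdiag q)]
    have hprod : (∏ q, (X ⟨pick q, pickP q⟩ :
        MvPolynomial {p : Fin n × Fin n // p ∈ S ∪ PhiSet r s n S} K)) =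
        monomial (wv r s n S γ) 1 := by
      have h1 : (∏ q, (X ⟨pick q, pickP q⟩ :
          MvPolynomial {p : Fin n × Fin n // p ∈ S ∪ PhiSet r s n S} K)) =
          ∏ q, monomial (Finsupp.single (⟨pick q, pickP q⟩ :
            {p : Fin n × Fin n // p ∈ S ∪ PhiSet r s n S}) 1) (1 : K) := rfl
      rw [h1, prod_monomial, Finset.prod_const_one]
      have hsum2 : (∑ q : Fin ((Tg S γ).image Prod.fst).card,
          Finsupp.single (⟨pick q, pickP q⟩ :
            {p : Fin n × Fin n // p ∈ S ∪ PhiSet r s n S}) 1) = wv r s n S γ := by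
        rw [wv]
        apply Finset.sum_bij (i := fun q (_ : q ∈ Finset.univ) => pick q)
        · intro q _
          exact pickT q
        · intro q _ q' _ h
          exact pickinj h
        · intro η hη
          refine ⟨(((Tg S γ).image Prod.snd).orderIsoOfFin pfc).symm
            ⟨η.2, Finset.mem_image_of_mem _ hη⟩, Finset.mem_univ _, ?_⟩
          apply T_col_inj hS (pickT _) hη
          rw [pick2, OrderIso.apply_symm_apply]
        · intro q _
          rw [embedV, dif_pos (pickP q)]
      exact congrArg (fun w => monomial w (1 : K)) hsum2
    rw [hprod]
    rcases Int.units_eq_one_or (Equiv.Perm.sign σ₀) with h | h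
    · refine ⟨1, one_ne_zero, ?_⟩
      rw [h, one_smul]
    · refine ⟨-1, neg_ne_zero.2 one_ne_zero, ?_⟩
      rw [h, Units.smul_def]
      push_cast
      rw [neg_one_smul]
      rw [← map_neg (monomial (wv r s n S γ))]
  exact main _ _

theorem restrict_Mminor_zero (hS : IsBase (Mset r s n) S) {γ : Fin n × Fin n}
    (hγM : γ ∈ Mset r s n) (hγ : γ ∉ S ∪ PhiSet r s n S) :
    restrictY K r s n S (Mminor K r s n S γ) = 0 := by
  classical
  have hJI : ((Tg S γ).image Prod.snd).card = ((Tg S γ).image Prod.fst).card := by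
    rw [rows_card hS, cols_card hS]
  rw [Mminor, rows_eq γ, cols_eq γ, minorDet, dif_pos hJI]
  have main : ∀ (pfr : ((Tg S γ).image Prod.fst).card = ((Tg S γ).image Prod.fst).card)
      (pfc : ((Tg S γ).image Prod.snd).card = ((Tg S γ).image Prod.fst).card),
      restrictY K r s n S (Matrix.det (Matrix.of
        fun p q : Fin ((Tg S γ).image Prod.fst).card =>
        Xmat K r s n ((((Tg S γ).image Prod.fst).orderIsoOfFin pfr) p).1
          ((((Tg S γ).image Prod.snd).orderIsoOfFin pfc) q).1)) = 0 := by
    intro pfr pfc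
    have hmd : restrictY K r s n S (Matrix.det (Matrix.of
        fun p q : Fin ((Tg S γ).image Prod.fst).card =>
        Xmat K r s n ((((Tg S γ).image Prod.fst).orderIsoOfFin pfr) p).1
          ((((Tg S γ).image Prod.snd).orderIsoOfFin pfc) q).1)) =
        Matrix.det ((Matrix.of fun p q : Fin ((Tg S γ).image Prod.fst).card =>
        Xmat K r s n ((((Tg S γ).image Prod.fst).orderIsoOfFin pfr) p).1
          ((((Tg S γ).image Prod.snd).orderIsoOfFin pfc) q).1).map
          (fun x => restrictY K r s n S x)) :=
      RingHom.map_det (restrictY K r s n S).toRingHom _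
    rw [hmd]
    have hγ2 : γ.2 ∈ (Tg S γ).image Prod.snd :=
      Finset.mem_image_of_mem _ (Finset.mem_insert_self _ _)
    apply Matrix.det_eq_zero_of_column_eq_zero
      ((((Tg S γ).image Prod.snd).orderIsoOfFin pfc).symm ⟨γ.2, hγ2⟩)
    intro p
    rw [Matrix.map_apply, Matrix.of_apply]
    have hcol : ((((Tg S γ).image Prod.snd).orderIsoOfFin pfc)
        ((((Tg S γ).image Prod.snd).orderIsoOfFin pfc).symm ⟨γ.2, hγ2⟩)).1 = γ.2 := by
      rw [OrderIso.apply_symm_apply]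
    rw [restrict_Xmat K hS, hcol]
    obtain ⟨τ, hτT, hτ1⟩ := Finset.mem_image.1
      ((((Tg S γ).image Prod.fst).orderIsoOfFin pfr) p).2
    rw [← hτ1]
    rcases Finset.mem_insert.1 hτT with rfl | hτ
    · rw [dif_neg (by rwa [Prod.mk.eta])]
    · rw [Finset.mem_filter] at hτ
      rw [dif_neg (ZCOL hS hτ.1 hτ.2.2)]
  exact main _ _

theorem restrict_Lpoly (hS : IsBase (Mset r s n) S) {ξ ξ' : Fin n × Fin n} (hξ : ξ ∈ S)
    (hξ' : ξ' ∈ S) (hd : inDr r s (ξ.2, ξ'.1)) :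
    ∃ ε : K, ε ≠ 0 ∧ restrictY K r s n S (Lpoly K r s n S ξ ξ') =
      monomial (wv r s n S ξ + wv r s n S (ξ.2, ξ'.2)) ε := by
  classical
  have hφ : (ξ.2, ξ'.2) ∈ S ∪ PhiSet r s n S :=
    Finset.mem_union_right _ (mem_PhiSet.2 ⟨ξ, hξ, ξ', hξ', hd, rfl⟩)
  obtain ⟨ε₁, hε₁, h1⟩ := restrict_Mminor K hS (Finset.mem_union_left _ hξ)
  obtain ⟨ε₂, hε₂, h2⟩ := restrict_Mminor K hS hφ
  refine ⟨ε₁ * ε₂, mul_ne_zero hε₁ hε₂, ?_⟩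
  rw [Lpoly, map_sum]
  have hmem : ξ.2 ∈ Finset.univ.filter (fun m : Fin n =>
      (m = ξ.2 ∨ inDr r s (ξ.2, m)) ∧ (m = ξ'.1 ∨ inDr r s (m, ξ'.1))) := by
    rw [Finset.mem_filter]
    exact ⟨Finset.mem_univ _, Or.inl rfl, Or.inr hd⟩
  rw [Finset.sum_eq_single ξ.2]
  · rw [map_mul]
    have he : (ξ.1, ξ.2) = ξ := Prod.mk.eta
    rw [he, h1, h2, monomial_mul]
  · intro m hm hne
    rw [Finset.mem_filter] at hm
    have hdm : inDr r s (ξ.2, m) := (hm.2.1).resolve_left hne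
    have hMm : (ξ.1, m) ∈ Mset r s n := by
      have hx := hS.1 hξ
      rw [Mset, Finset.mem_filter] at hx ⊢
      refine ⟨Finset.mem_univ _, ?_⟩
      have := hdm.2
      simp only at this ⊢
      omega
    rw [map_mul, restrict_Mminor_zero K hS hMm (ZCOL hS hξ hdm.1), zero_mul]
  · intro h
    exact absurd hmem h

end Minor

section Inj
variable {n s : ℕ} {r : ℕ → ℕ} {S : Finset (Fin n × Fin n)}

/-- Width of a root. -/
def wd {n : ℕ} (p : Fin n × Fin n) : ℕ := (p.2 : ℕ) - (p.1 : ℕ)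

theorem wd_lt (hS : IsBase (Mset r s n) S) {γ τ : Fin n × Fin n} (hτ : τ ∈ S)
    (h1 : γ.1 < τ.1) (h2 : τ.2 < γ.2) : wd τ < wd γ := by
  have h3 := Mset_lt (hS.1 hτ)
  rw [Fin.lt_def] at h1 h2 h3
  rw [wd, wd]
  omega

theorem phi_not_in_TgS (hS : IsBase (Mset r s n) S) {p ζ : Fin n × Fin n}
    (hp : p ∈ PhiSet r s n S) (hζ : ζ ∈ S) (hmem : p ∈ Tg S ζ) : False := by
  rcases Finset.mem_insert.1 hmem with rfl | hmem
  · exact S_Phi_disj hS hζ hp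
  · exact S_Phi_disj hS (Finset.mem_filter.1 hmem).1 hp

theorem phi_inj (hS : IsBase (Mset r s n) S) {ξ ξ' ζ ζ' : Fin n × Fin n} (hξ : ξ ∈ S)
    (hξ' : ξ' ∈ S) (hζ : ζ ∈ S) (hζ' : ζ' ∈ S)
    (h : (ξ.2, ξ'.2) = (ζ.2, ζ'.2)) : ξ = ζ ∧ ξ' = ζ' := by
  rw [Prod.mk.injEq] at h
  exact ⟨col_inj hS hξ hζ h.1, col_inj hS hξ' hζ' h.2⟩

/-- The exponent vectors of the extended-base invariants restricted to `Y`. -/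
noncomputable def tvec (r : ℕ → ℕ) (s n : ℕ) (S : Finset (Fin n × Fin n)) :
    ({p : Fin n × Fin n // p ∈ S} ⊕ {q : (Fin n × Fin n) × (Fin n × Fin n) //
      q.1 ∈ S ∧ q.2 ∈ S ∧ inDr r s (q.1.2, q.2.1)}) →
      ({p : Fin n × Fin n // p ∈ S ∪ PhiSet r s n S} →₀ ℕ) :=
  Sum.elim (fun ξ => wv r s n S ξ.1)
    (fun q => wv r s n S q.1.1 + wv r s n S (q.1.1.2, q.1.2.2))

theorem tvec_inj (hS : IsBase (Mset r s n) S) :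
    Function.Injective fun d : (({p : Fin n × Fin n // p ∈ S} ⊕
        {q : (Fin n × Fin n) × (Fin n × Fin n) //
          q.1 ∈ S ∧ q.2 ∈ S ∧ inDr r s (q.1.2, q.2.1)}) →₀ ℕ) =>
      d.sum fun i k => k • tvec r s n S i := by
  classical
  intro d d' hdd
  simp only at hdd
  set A := d.support ∪ d'.support with hA
  have happly : ∀ (e : (_ →₀ ℕ)), e.support ⊆ A → ∀ x,
      (e.sum fun i k => k • tvec r s n S i) x = ∑ i ∈ A, e i * (tvec r s n S i) x := by
    intro e he x
    rw [Finsupp.sum, Finset.sum_apply']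
    rw [Finset.sum_congr rfl (fun i _ => by rw [Finsupp.smul_apply, smul_eq_mul])]
    exact Finset.sum_subset he fun i _ his => by
      rw [Finsupp.notMem_support_iff.1 his, zero_mul]
  have key : ∀ x, ∑ i ∈ A, d i * (tvec r s n S i) x = ∑ i ∈ A, d' i * (tvec r s n S i) x := by
    intro x
    rw [← happly d Finset.subset_union_left x, ← happly d' Finset.subset_union_right x, hdd]
  -- recover the Q-coordinates
  have hQ : ∀ qq, d (Sum.inr qq) = d' (Sum.inr qq) := by
    intro qq
    have hφP : (qq.1.1.2, qq.1.2.2) ∈ S ∪ PhiSet r s n S :=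
      Finset.mem_union_right _ (mem_PhiSet.2 ⟨qq.1.1, qq.2.1, qq.1.2, qq.2.2.1, qq.2.2.2, rfl⟩)
    have hφΦ : (qq.1.1.2, qq.1.2.2) ∈ PhiSet r s n S :=
      mem_PhiSet.2 ⟨qq.1.1, qq.2.1, qq.1.2, qq.2.2.1, qq.2.2.2, rfl⟩
    set x : {p : Fin n × Fin n // p ∈ S ∪ PhiSet r s n S} := ⟨(qq.1.1.2, qq.1.2.2), hφP⟩ with hx
    have ht : ∀ i, (tvec r s n S i) x = if i = Sum.inr qq then 1 else 0 := by
      intro i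
      cases i with
      | inl sζ =>
        rw [if_neg (by simp)]
        simp only [tvec, Sum.elim_inl]
        rw [wv_apply, if_neg (fun hc => phi_not_in_TgS hS hφΦ sζ.2 hc)]
      | inr qq' =>
        simp only [tvec, Sum.elim_inr]
        rw [Finsupp.add_apply]
        rw [wv_apply, if_neg (fun hc => phi_not_in_TgS hS hφΦ qq'.2.1 hc)]
        rw [wv_apply]
        by_cases he : qq' = qq
        · subst he
          have hmemx : (x : Fin n × Fin n) ∈ Tg S (qq'.1.1.2, qq'.1.2.2) :=
            Finset.mem_insert_self _ _
          rw [if_pos hmemx, if_pos rfl]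
        · rw [if_neg, if_neg (by simpa using he)]
          intro hc
          rcases Finset.mem_insert.1 hc with heq | hmem
          · have := phi_inj hS qq.2.1 qq.2.2.1 qq'.2.1 qq'.2.2.1 heq
            exact he (Subtype.ext (Prod.ext this.1.symm this.2.symm))
          · exact S_Phi_disj hS (Finset.mem_filter.1 hmem).1 hφΦ
    have hone : ∀ (e : (_ →₀ ℕ)), e.support ⊆ A →
        ∑ i ∈ A, e i * (tvec r s n S i) x = e (Sum.inr qq) := by
      intro e he
      rw [Finset.sum_congr rfl (fun i _ => by rw [ht i, mul_ite, mul_one, mul_zero])]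
      rw [Finset.sum_ite_eq' A (Sum.inr qq) e]
      by_cases hin : Sum.inr qq ∈ A
      · rw [if_pos hin]
      · rw [if_neg hin, Finsupp.notMem_support_iff.1 (fun hc => hin (he hc))]
    have := key x
    rwa [hone d Finset.subset_union_left, hone d' Finset.subset_union_right] at this
  -- recover the S-coordinates by downward induction on the width
  have hmain : ∀ (m : ℕ) (sξ : {p : Fin n × Fin n // p ∈ S}), n ≤ wd sξ.1 + m →
      d (Sum.inl sξ) = d' (Sum.inl sξ) := by
    intro m
    induction m with
    | zero =>
      intro sξ hm
      exfalso
      have h1 := sξ.1.2.isLt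
      rw [wd] at hm
      omega
    | succ m ih =>
      intro sξ hm
      set x : {p : Fin n × Fin n // p ∈ S ∪ PhiSet r s n S} :=
        ⟨sξ.1, Finset.mem_union_left _ sξ.2⟩ with hx
      have hterm : ∀ i ∈ A, i ≠ Sum.inl sξ → d i * (tvec r s n S i) x = d' i * (tvec r s n S i) x := by
        intro i _ hne
        cases i with
        | inr qq => rw [hQ qq]
        | inl sζ =>
          by_cases h0 : (tvec r s n S (Sum.inl sζ)) x = 0
          · rw [h0, mul_zero, mul_zero]
          · have hmem : sξ.1 ∈ Tg S sζ.1 := by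
              by_contra hc
              exact h0 (by simp only [tvec, Sum.elim_inl]; rw [wv_apply, if_neg hc])
            rcases Finset.mem_insert.1 hmem with heq | hmem
            · exact absurd (congrArg Sum.inl (Subtype.ext heq.symm)) hne
            · rw [Finset.mem_filter] at hmem
              have hlt := wd_lt hS hmem.1 hmem.2.1 hmem.2.2
              rw [ih sζ (by omega)]
      have hsplit := key x
      by_cases hin : Sum.inl sξ ∈ A
      · rw [Finset.sum_eq_sum_sdiff_singleton_add hin, Finset.sum_eq_sum_sdiff_singleton_add hin]
          at hsplit
        have hrest : ∑ i ∈ A \ {Sum.inl sξ}, d i * (tvec r s n S i) x =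
            ∑ i ∈ A \ {Sum.inl sξ}, d' i * (tvec r s n S i) x := by
          apply Finset.sum_congr rfl
          intro i hi
          rw [Finset.mem_sdiff, Finset.mem_singleton] at hi
          exact hterm i hi.1 hi.2
        rw [hrest] at hsplit
        have hcancel := Nat.add_left_cancel hsplit
        have hone : (tvec r s n S (Sum.inl sξ)) x = 1 := by
          simp only [tvec, Sum.elim_inl]
          have hmemx : (x : Fin n × Fin n) ∈ Tg S sξ.1 := Finset.mem_insert_self _ _
          rw [wv_apply, if_pos hmemx]
        rwa [hone, mul_one, mul_one] at hcancel
      · rw [Finsupp.notMem_support_iff.1 (fun hc => hin (Finset.mem_union_left _ hc)),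
          Finsupp.notMem_support_iff.1 (fun hc => hin (Finset.mem_union_right _ hc))]
  apply Finsupp.ext
  intro i
  cases i with
  | inl sξ => exact hmain n sξ (Nat.le_add_left _ _)
  | inr qq => exact hQ qq

end Inj

/-- the restrictions to `Y` of the invariants of the extended base,
`{M_ξ|_Y : ξ ∈ S} ∪ {L_φ|_Y : φ ∈ Φ}`, are algebraically independent over `K`. -/
theorem statement6 (K : Type) [Field K] [IsAlgClosed K] [CharZero K]
    (n s : ℕ) (r : ℕ → ℕ) (hpos : ∀ k < s, 0 < r k) (hsum : Rsum r s = n)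
    (S : Finset (Fin n × Fin n)) (hS : IsBase (Mset r s n) S) :
    AlgebraicIndependent K (Sum.elim
      (fun ξ : {p : Fin n × Fin n // p ∈ S} =>
        restrictY K r s n S (Mminor K r s n S ξ.1))
      (fun q : {q : (Fin n × Fin n) × (Fin n × Fin n) //
          q.1 ∈ S ∧ q.2 ∈ S ∧ inDr r s (q.1.2, q.2.1)} =>
        restrictY K r s n S (Lpoly K r s n S q.1.1 q.1.2))) := by
  classical
  have hex : ∀ i, ∃ ε : K, ε ≠ 0 ∧ (Sum.elim
      (fun ξ : {p : Fin n × Fin n // p ∈ S} =>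
        restrictY K r s n S (Mminor K r s n S ξ.1))
      (fun q : {q : (Fin n × Fin n) × (Fin n × Fin n) //
          q.1 ∈ S ∧ q.2 ∈ S ∧ inDr r s (q.1.2, q.2.1)} =>
        restrictY K r s n S (Lpoly K r s n S q.1.1 q.1.2)) i) =
      monomial (tvec r s n S i) ε := by
    intro i
    cases i with
    | inl ξ =>
      simp only [Sum.elim_inl, tvec]
      exact restrict_Mminor K hS (Finset.mem_union_left _ ξ.2)
    | inr q =>
      simp only [Sum.elim_inr, tvec]
      exact restrict_Lpoly K hS q.2.1 q.2.2.1 q.2.2.2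
  choose ε hε hfeq using hex
  rw [funext hfeq]
  exact monIndep (tvec r s n S) ε hε (tvec_inj hS)
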